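/- At the points (a,b) = (−27/2, ±(5√5)/2), the function Δ satisfies Δ = 0, ∂Δ/∂a = 0 and ∂Δ/∂b = 0; moreover at (−27/2, (5√5)/2) the second-order partial derivatives are ∂²Δ/∂a² = −109350, ∂²Δ/∂a∂b = −109350√5 and ∂²Δ/∂b² = −546750, so the Hessian of Δ there is negative semidefinite of rank 1 (these are the cuspidal points of the curve Δ = 0). -/

import Mathlib

open Real

private lemma deriv_poly6 (c0 c1 c2 c3 c4 c5 c6 : ℝ) :
    deriv (fun t : ℝ => c6*t^6 + c5*t^5 + c4*t^4 + c3*t^3 + c2*t^2 + c1*t + c0)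
      = fun x : ℝ => 0*x^6 + (6*c6)*x^5 + (5*c5)*x^4 + (4*c4)*x^3 + (3*c3)*x^2
        + (2*c2)*x + c1 := by
  funext x
  have h : HasDerivAt (fun t : ℝ => c6*t^6 + c5*t^5 + c4*t^4 + c3*t^3 + c2*t^2 + c1*t + c0)
      (c6*((6:ℕ)*x^(6-1)) + c5*((5:ℕ)*x^(5-1)) + c4*((4:ℕ)*x^(4-1)) + c3*((3:ℕ)*x^(3-1))
        + c2*((2:ℕ)*x^(2-1)) + c1*1 + 0) x := by
    exact (((((((hasDerivAt_pow 6 x).const_mul c6).add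
      ((hasDerivAt_pow 5 x).const_mul c5)).add
      ((hasDerivAt_pow 4 x).const_mul c4)).add
      ((hasDerivAt_pow 3 x).const_mul c3)).add
      ((hasDerivAt_pow 2 x).const_mul c2)).add
      ((hasDerivAt_id' x : HasDerivAt (fun y : ℝ => y) 1 x).const_mul c1)).add (hasDerivAt_const x c0)
  rw [h.deriv]
  norm_num
  ring

theorem disc_cuspidal_points (Δ : ℝ → ℝ → ℝ)
    (hΔ : Δ = fun a b => 16*a^5 + 4*(b^2 + 68)*a^4 + 16*(b^2 + 144)*a^3
      - 8*(b^2 - 80)*(16 + b^2)*a^2 + 96*(16 + b^2)^2*a + 4*(16 + b^2)^3) :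
    Δ (-27/2) (5*Real.sqrt 5/2) = 0 ∧
    Δ (-27/2) (-(5*Real.sqrt 5)/2) = 0 ∧
    deriv (fun a => Δ a (5*Real.sqrt 5/2)) (-27/2) = 0 ∧
    deriv (fun b => Δ (-27/2) b) (5*Real.sqrt 5/2) = 0 ∧
    deriv (fun a => Δ a (-(5*Real.sqrt 5)/2)) (-27/2) = 0 ∧
    deriv (fun b => Δ (-27/2) b) (-(5*Real.sqrt 5)/2) = 0 ∧
    deriv (deriv (fun a => Δ a (5*Real.sqrt 5/2))) (-27/2) = -109350 ∧
    deriv (fun a => deriv (fun b => Δ a b) (5*Real.sqrt 5/2)) (-27/2)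
      = -109350*Real.sqrt 5 ∧
    deriv (deriv (fun b => Δ (-27/2) b)) (5*Real.sqrt 5/2) = -546750 ∧
    (-(!![(-109350 : ℝ), -109350*Real.sqrt 5;
        -109350*Real.sqrt 5, -546750])).PosSemidef ∧
    (!![(-109350 : ℝ), -109350*Real.sqrt 5;
        -109350*Real.sqrt 5, -546750]).rank = 1 := by
  have hs : Real.sqrt 5 ^ 2 = 5 := Real.sq_sqrt (by norm_num)
  set s := Real.sqrt 5 with hsdef
  have hb : (5*s/2)^2 = 125/4 := by linear_combination (25/4) * hs
  have hb' : ((-(5*s))/2)^2 = 125/4 := by linear_combination (25/4) * hs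
  subst hΔ
  -- quintic in a at b = 5√5/2 (written as a degree-6 poly with zero top coeff)
  have fa : (fun a : ℝ => 16*a^5 + 4*((5*s/2)^2 + 68)*a^4 + 16*((5*s/2)^2 + 144)*a^3
      - 8*((5*s/2)^2 - 80)*(16 + (5*s/2)^2)*a^2 + 96*(16 + (5*s/2)^2)^2*a + 4*(16 + (5*s/2)^2)^3)
      = fun t : ℝ => (0:ℝ)*t^6 + 16*t^5 + 397*t^4 + 2804*t^3 + (36855/2)*t^2
        + 214326*t + 6751269/16 := by
    funext t; rw [hb]; ring
  have fa' : (fun a : ℝ => 16*a^5 + 4*(((-(5*s))/2)^2 + 68)*a^4 + 16*(((-(5*s))/2)^2 + 144)*a^3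
      - 8*(((-(5*s))/2)^2 - 80)*(16 + ((-(5*s))/2)^2)*a^2 + 96*(16 + ((-(5*s))/2)^2)^2*a
      + 4*(16 + ((-(5*s))/2)^2)^3)
      = fun t : ℝ => (0:ℝ)*t^6 + 16*t^5 + 397*t^4 + 2804*t^3 + (36855/2)*t^2
        + 214326*t + 6751269/16 := by
    funext t; rw [hb']; ring
  -- sextic in b at a = -27/2
  have fb : (fun b : ℝ => 16*(-27/2:ℝ)^5 + 4*(b^2 + 68)*(-27/2:ℝ)^4 + 16*(b^2 + 144)*(-27/2:ℝ)^3
      - 8*(b^2 - 80)*(16 + b^2)*(-27/2:ℝ)^2 + 96*(16 + b^2)^2*(-27/2:ℝ) + 4*(16 + b^2)^3)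
      = fun t : ℝ => (4:ℝ)*t^6 + 0*t^5 + (-2562)*t^4 + 0*t^3 + (593625/4)*t^2
        + 0*t + (-4515625/2) := by
    funext t; ring
  have h3 : (5*s/2)^3 = (125/4)*(5*s/2) := by linear_combination (5*s/2) * hb
  have h5 : (5*s/2)^5 = (15625/16)*(5*s/2) := by
    linear_combination ((5*s/2)^3 + (125/4)*(5*s/2)) * hb
  have h4 : (5*s/2)^4 = 15625/16 := by linear_combination ((5*s/2)^2 + 125/4) * hb
  have h3' : ((-(5*s))/2)^3 = (125/4)*((-(5*s))/2) := by linear_combination ((-(5*s))/2) * hb'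
  have h5' : ((-(5*s))/2)^5 = (15625/16)*((-(5*s))/2) := by
    linear_combination (((-(5*s))/2)^3 + (125/4)*((-(5*s))/2)) * hb'
  refine ⟨?_, ?_, ?_, ?_, ?_, ?_, ?_, ?_, ?_, ?_, ?_⟩
  · show 16*(-27/2:ℝ)^5 + 4*((5*s/2)^2 + 68)*(-27/2:ℝ)^4 + 16*((5*s/2)^2 + 144)*(-27/2:ℝ)^3
      - 8*((5*s/2)^2 - 80)*(16 + (5*s/2)^2)*(-27/2:ℝ)^2 + 96*(16 + (5*s/2)^2)^2*(-27/2:ℝ)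
      + 4*(16 + (5*s/2)^2)^3 = 0
    rw [hb]; norm_num
  · show 16*(-27/2:ℝ)^5 + 4*(((-(5*s))/2)^2 + 68)*(-27/2:ℝ)^4 + 16*(((-(5*s))/2)^2 + 144)*(-27/2:ℝ)^3
      - 8*(((-(5*s))/2)^2 - 80)*(16 + ((-(5*s))/2)^2)*(-27/2:ℝ)^2 + 96*(16 + ((-(5*s))/2)^2)^2*(-27/2:ℝ)
      + 4*(16 + ((-(5*s))/2)^2)^3 = 0
    rw [hb']; norm_num
  · rw [show (fun a : ℝ => (fun a b : ℝ => 16*a^5 + 4*(b^2 + 68)*a^4 + 16*(b^2 + 144)*a^3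
      - 8*(b^2 - 80)*(16 + b^2)*a^2 + 96*(16 + b^2)^2*a + 4*(16 + b^2)^3) a (5*s/2))
      = fun t : ℝ => (0:ℝ)*t^6 + 16*t^5 + 397*t^4 + 2804*t^3 + (36855/2)*t^2
        + 214326*t + 6751269/16 from fa, deriv_poly6]
    norm_num
  · rw [show (fun b : ℝ => (fun a b : ℝ => 16*a^5 + 4*(b^2 + 68)*a^4 + 16*(b^2 + 144)*a^3
      - 8*(b^2 - 80)*(16 + b^2)*a^2 + 96*(16 + b^2)^2*a + 4*(16 + b^2)^3) (-27/2) b)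
      = fun t : ℝ => (4:ℝ)*t^6 + 0*t^5 + (-2562)*t^4 + 0*t^3 + (593625/4)*t^2
        + 0*t + (-4515625/2) from fb, deriv_poly6]
    show (0:ℝ)*(5*s/2)^6 + (6*4)*(5*s/2)^5 + (5*0)*(5*s/2)^4 + (4*(-2562))*(5*s/2)^3
      + (3*0)*(5*s/2)^2 + (2*(593625/4))*(5*s/2) + 0 = 0
    linear_combination 24*h5 + (4*(-2562))*h3
  · rw [show (fun a : ℝ => (fun a b : ℝ => 16*a^5 + 4*(b^2 + 68)*a^4 + 16*(b^2 + 144)*a^3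
      - 8*(b^2 - 80)*(16 + b^2)*a^2 + 96*(16 + b^2)^2*a + 4*(16 + b^2)^3) a ((-(5*s))/2))
      = fun t : ℝ => (0:ℝ)*t^6 + 16*t^5 + 397*t^4 + 2804*t^3 + (36855/2)*t^2
        + 214326*t + 6751269/16 from fa', deriv_poly6]
    norm_num
  · rw [show (fun b : ℝ => (fun a b : ℝ => 16*a^5 + 4*(b^2 + 68)*a^4 + 16*(b^2 + 144)*a^3
      - 8*(b^2 - 80)*(16 + b^2)*a^2 + 96*(16 + b^2)^2*a + 4*(16 + b^2)^3) (-27/2) b)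
      = fun t : ℝ => (4:ℝ)*t^6 + 0*t^5 + (-2562)*t^4 + 0*t^3 + (593625/4)*t^2
        + 0*t + (-4515625/2) from fb, deriv_poly6]
    show (0:ℝ)*((-(5*s))/2)^6 + (6*4)*((-(5*s))/2)^5 + (5*0)*((-(5*s))/2)^4
      + (4*(-2562))*((-(5*s))/2)^3 + (3*0)*((-(5*s))/2)^2 + (2*(593625/4))*((-(5*s))/2) + 0 = 0
    linear_combination 24*h5' + (4*(-2562))*h3'
  · rw [show (fun a : ℝ => (fun a b : ℝ => 16*a^5 + 4*(b^2 + 68)*a^4 + 16*(b^2 + 144)*a^3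
      - 8*(b^2 - 80)*(16 + b^2)*a^2 + 96*(16 + b^2)^2*a + 4*(16 + b^2)^3) a (5*s/2))
      = fun t : ℝ => (0:ℝ)*t^6 + 16*t^5 + 397*t^4 + 2804*t^3 + (36855/2)*t^2
        + 214326*t + 6751269/16 from fa, deriv_poly6, deriv_poly6]
    norm_num
  · -- mixed partial
    have inner : ∀ a : ℝ, (fun b : ℝ => (fun a b : ℝ => 16*a^5 + 4*(b^2 + 68)*a^4
        + 16*(b^2 + 144)*a^3 - 8*(b^2 - 80)*(16 + b^2)*a^2 + 96*(16 + b^2)^2*a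
        + 4*(16 + b^2)^3) a b)
        = fun t : ℝ => (4:ℝ)*t^6 + 0*t^5 + (-8*a^2 + 96*a + 192)*t^4 + 0*t^3
          + (4*a^4 + 16*a^3 + 512*a^2 + 3072*a + 3072)*t^2 + 0*t
          + (16*a^5 + 272*a^4 + 2304*a^3 + 10240*a^2 + 24576*a + 16384) := by
      intro a; funext t; show 16*a^5 + 4*(t^2 + 68)*a^4 + 16*(t^2 + 144)*a^3
        - 8*(t^2 - 80)*(16 + t^2)*a^2 + 96*(16 + t^2)^2*a + 4*(16 + t^2)^3 = _
      ring
    have outer : (fun a : ℝ => deriv (fun b : ℝ => (fun a b : ℝ => 16*a^5 + 4*(b^2 + 68)*a^4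
        + 16*(b^2 + 144)*a^3 - 8*(b^2 - 80)*(16 + b^2)*a^2 + 96*(16 + b^2)^2*a
        + 4*(16 + b^2)^3) a b) (5*s/2))
        = fun t : ℝ => (0:ℝ)*t^6 + 0*t^5 + (8*(5*s/2))*t^4 + (32*(5*s/2))*t^3
          + (24*(5*s/2))*t^2 + (18144*(5*s/2))*t + (107163/2)*(5*s/2) := by
      funext a
      rw [inner a, deriv_poly6]
      show (0:ℝ)*(5*s/2)^6 + (6*4)*(5*s/2)^5 + (5*0)*(5*s/2)^4
        + (4*(-8*a^2 + 96*a + 192))*(5*s/2)^3 + (3*0)*(5*s/2)^2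
        + (2*(4*a^4 + 16*a^3 + 512*a^2 + 3072*a + 3072))*(5*s/2) + 0 = _
      linear_combination 24*h5 + (4*(-8*a^2 + 96*a + 192))*h3
    rw [outer, deriv_poly6]
    show (0:ℝ)*(-27/2:ℝ)^6 + (6*0)*(-27/2:ℝ)^5 + (5*0)*(-27/2:ℝ)^4
      + (4*(8*(5*s/2)))*(-27/2:ℝ)^3 + (3*(32*(5*s/2)))*(-27/2:ℝ)^2
      + (2*(24*(5*s/2)))*(-27/2:ℝ) + 18144*(5*s/2) = -109350*s
    ring
  · rw [show (fun b : ℝ => (fun a b : ℝ => 16*a^5 + 4*(b^2 + 68)*a^4 + 16*(b^2 + 144)*a^3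
      - 8*(b^2 - 80)*(16 + b^2)*a^2 + 96*(16 + b^2)^2*a + 4*(16 + b^2)^3) (-27/2) b)
      = fun t : ℝ => (4:ℝ)*t^6 + 0*t^5 + (-2562)*t^4 + 0*t^3 + (593625/4)*t^2
        + 0*t + (-4515625/2) from fb, deriv_poly6, deriv_poly6]
    show (0:ℝ)*(5*s/2)^6 + (6*0)*(5*s/2)^5 + (5*(6*4))*(5*s/2)^4
      + (4*(5*0))*(5*s/2)^3 + (3*(4*(-2562)))*(5*s/2)^2 + (2*(3*0))*(5*s/2)
      + 2*(593625/4) = -546750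
    linear_combination 120*h4 + (3*(4*(-2562)))*hb
  · -- PosSemidef
    rw [Matrix.posSemidef_iff_dotProduct_mulVec]
    refine ⟨?_, ?_⟩
    · ext i j
      fin_cases i <;> fin_cases j <;>
        simp [Matrix.conjTranspose_apply]
    · intro x
      have hx : dotProduct (star x) ((-(!![(-109350 : ℝ), -109350*s;
          -109350*s, -546750])).mulVec x)
          = 109350*(x 0)^2 + 2*(109350*s)*(x 0)*(x 1) + 546750*(x 1)^2 := by
        simp [Matrix.mulVec, dotProduct, Fin.sum_univ_two]
        ring
      rw [hx]
      nlinarith [sq_nonneg (x 0 + s * x 1), hs, Real.sqrt_nonneg 5, sq_nonneg (x 0), sq_nonneg (x 1)]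
  · -- rank
    set M : Matrix (Fin 2) (Fin 2) ℝ := !![(-109350 : ℝ), -109350*s;
        -109350*s, -546750] with hM
    have hfac : M = (!![(-109350:ℝ); -109350*s] : Matrix (Fin 2) (Fin 1) ℝ)
        * (!![(1:ℝ), s] : Matrix (Fin 1) (Fin 2) ℝ) := by
      ext i j
      fin_cases i <;> fin_cases j <;>
        simp [hM, Matrix.mul_apply, Fin.sum_univ_one] <;> nlinarith [hs]
    have hle : M.rank ≤ 1 := by
      rw [hfac]
      refine le_trans (Matrix.rank_mul_le_left _ _) ?_
      simpa using Matrix.rank_le_card_width (!![(-109350:ℝ); -109350*s] : Matrix (Fin 2) (Fin 1) ℝ)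
    have hge : 1 ≤ M.rank := by
      rw [Matrix.rank, Nat.one_le_iff_ne_zero]
      intro h0
      have hnz : M.mulVecLin ![1, 0] ≠ 0 := by
        intro hc
        have h00 : (M.mulVecLin ![1, 0]) 0 = 0 := by rw [hc]; rfl
        simp [hM, Matrix.mulVecLin, Matrix.mulVec, dotProduct, Fin.sum_univ_two] at h00
      have : (⟨M.mulVecLin ![1, 0], LinearMap.mem_range_self _ _⟩ :
          LinearMap.range M.mulVecLin) ≠ 0 := by
        intro hc
        exact hnz (by simpa using congrArg Subtype.val hc)
      have hpos : 0 < Module.finrank ℝ (LinearMap.range M.mulVecLin) :=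
        Module.finrank_pos_iff_exists_ne_zero.mpr ⟨_, this⟩
      omega
    omega
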